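/- Let K > 0 and let η : (0,∞)² → [0,∞) be a measurable function satisfying η(x,y) ≤ K·(x²+y²)^{−3/2} for all x, y > 0, and let q : (0,∞) → (0,∞) be non-increasing. Then ∫_0^∞ q(u)·η(u, q(u)) du < ∞; indeed, for every x₀ > 0 this integral is at most K·(x₀/q(x₀)² + q(x₀)/(2·x₀²)). -/

import Mathlib

open MeasureTheory Set

/-- Finiteness (with an explicit bound) of `∫_0^∞ q(u) η(u, q(u)) du` for a density
`η` bounded by `K (x²+y²)^{-3/2}` and a non-increasing `q : (0,∞) → (0,∞)`. -/
theorem boundary_integral_finite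
    (K : ℝ) (hK : 0 < K) (η : ℝ × ℝ → ℝ) (hηmeas : Measurable η)
    (hηpos : ∀ x y : ℝ, 0 < x → 0 < y → 0 ≤ η (x, y))
    (hηbd : ∀ x y : ℝ, 0 < x → 0 < y → η (x, y) ≤ K * (x ^ 2 + y ^ 2) ^ (-(3 : ℝ) / 2))
    (q : ℝ → ℝ) (hq : AntitoneOn q (Set.Ioi 0)) (hqpos : ∀ x : ℝ, 0 < x → 0 < q x) :
    (∫⁻ u in Set.Ioi (0 : ℝ), ENNReal.ofReal (q u * η (u, q u))) < ⊤ ∧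
    ∀ x₀ : ℝ, 0 < x₀ →
      (∫⁻ u in Set.Ioi (0 : ℝ), ENNReal.ofReal (q u * η (u, q u))) ≤
        ENNReal.ofReal (K * (x₀ / (q x₀) ^ 2 + q x₀ / (2 * x₀ ^ 2))) := by
  have key : ∀ x₀ : ℝ, 0 < x₀ →
      (∫⁻ u in Set.Ioi (0 : ℝ), ENNReal.ofReal (q u * η (u, q u))) ≤
        ENNReal.ofReal (K * (x₀ / (q x₀) ^ 2 + q x₀ / (2 * x₀ ^ 2))) := by
    intro x₀ hx₀
    set a := q x₀ with ha
    have hapos : 0 < a := hqpos x₀ hx₀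
    -- pointwise bound by K * (q u)^2 ... first the generic chain
    have hpt : ∀ u : ℝ, 0 < u → q u * η (u, q u) ≤ K * (u ^ 2 + (q u) ^ 2) ^ (-(3:ℝ)/2) * q u := by
      intro u hu
      have := hηbd u (q u) hu (hqpos u hu)
      have hqu := hqpos u hu
      nlinarith [hηpos u (q u) hu (hqpos u hu),
        Real.rpow_natCast (u ^ 2 + (q u)^2) 0]
    -- split the integral
    have hsplit : Set.Ioi (0:ℝ) = Set.Ioc 0 x₀ ∪ Set.Ioi x₀ :=
      (Set.Ioc_union_Ioi_eq_Ioi hx₀.le).symm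
    rw [hsplit, lintegral_union measurableSet_Ioi Set.Ioc_disjoint_Ioi_same]
    -- bound on (0, x₀]
    have h1 : (∫⁻ u in Set.Ioc (0:ℝ) x₀, ENNReal.ofReal (q u * η (u, q u)))
        ≤ ENNReal.ofReal (K * x₀ / a ^ 2) := by
      have hb : ∀ u ∈ Set.Ioc (0:ℝ) x₀, ENNReal.ofReal (q u * η (u, q u))
          ≤ ENNReal.ofReal (K / a ^ 2) := by
        intro u hu
        apply ENNReal.ofReal_le_ofReal
        have hu0 : 0 < u := hu.1
        have hqu : 0 < q u := hqpos u hu0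
        have hqa : a ≤ q u := hq (mem_Ioi.2 hu0) (mem_Ioi.2 hx₀) hu.2
        have hrw : ((q u) ^ 2 : ℝ) ^ (-(3:ℝ)/2) = (q u) ^ (-3:ℝ) := by
          rw [← Real.rpow_natCast (q u) 2, ← Real.rpow_mul hqu.le]
          norm_num
        have hle : (u ^ 2 + (q u) ^ 2 : ℝ) ^ (-(3:ℝ)/2) ≤ ((q u) ^ 2 : ℝ) ^ (-(3:ℝ)/2) :=
          Real.rpow_le_rpow_of_nonpos (by positivity) (by nlinarith) (by norm_num)
        have h2 : q u * η (u, q u) ≤ K * (q u) ^ (-3:ℝ) * q u := by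
          calc q u * η (u, q u) ≤ K * (u ^ 2 + (q u) ^ 2) ^ (-(3:ℝ)/2) * q u := hpt u hu0
            _ ≤ K * (q u) ^ (-3:ℝ) * q u := by
                rw [← hrw]; gcongr
        have h3 : K * (q u) ^ (-3:ℝ) * q u = K / (q u) ^ 2 := by
          rw [show (-3:ℝ) = -(3:ℕ) by norm_num, Real.rpow_neg hqu.le,
            Real.rpow_natCast]
          field_simp
        have h4 : K / (q u) ^ 2 ≤ K / a ^ 2 := by
          apply div_le_div_of_nonneg_left hK.le (by positivity)
          nlinarith
        linarith [h2, h3 ▸ h2]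
      calc (∫⁻ u in Set.Ioc (0:ℝ) x₀, ENNReal.ofReal (q u * η (u, q u)))
          ≤ ∫⁻ _ in Set.Ioc (0:ℝ) x₀, ENNReal.ofReal (K / a ^ 2) :=
            setLIntegral_mono' measurableSet_Ioc hb
        _ = ENNReal.ofReal (K / a ^ 2) * volume (Set.Ioc (0:ℝ) x₀) := setLIntegral_const _ _
        _ = ENNReal.ofReal (K / a ^ 2) * ENNReal.ofReal x₀ := by
            rw [Real.volume_Ioc]; norm_num
        _ = ENNReal.ofReal (K * x₀ / a ^ 2) := by
            rw [← ENNReal.ofReal_mul (by positivity)]; ring_nf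
    -- bound on (x₀, ∞)
    have h2 : (∫⁻ u in Set.Ioi x₀, ENNReal.ofReal (q u * η (u, q u)))
        ≤ ENNReal.ofReal (K * a / (2 * x₀ ^ 2)) := by
      have hb : ∀ u ∈ Set.Ioi x₀, ENNReal.ofReal (q u * η (u, q u))
          ≤ ENNReal.ofReal (K * a * u ^ (-3:ℝ)) := by
        intro u hu
        apply ENNReal.ofReal_le_ofReal
        have hu0 : 0 < u := lt_trans hx₀ hu
        have hqu : 0 < q u := hqpos u hu0
        have hqa : q u ≤ a := hq (mem_Ioi.2 hx₀) (mem_Ioi.2 hu0) (le_of_lt hu)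
        have hrw : ((u:ℝ) ^ 2) ^ (-(3:ℝ)/2) = u ^ (-3:ℝ) := by
          rw [← Real.rpow_natCast u 2, ← Real.rpow_mul hu0.le]
          norm_num
        have hle : (u ^ 2 + (q u) ^ 2 : ℝ) ^ (-(3:ℝ)/2) ≤ ((u:ℝ) ^ 2) ^ (-(3:ℝ)/2) :=
          Real.rpow_le_rpow_of_nonpos (by positivity) (by nlinarith) (by norm_num)
        have hupos : (0:ℝ) < u ^ (-3:ℝ) := Real.rpow_pos_of_pos hu0 _
        calc q u * η (u, q u) ≤ K * (u ^ 2 + (q u) ^ 2) ^ (-(3:ℝ)/2) * q u := hpt u hu0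
          _ ≤ K * u ^ (-3:ℝ) * q u := by rw [← hrw]; gcongr
          _ ≤ K * a * u ^ (-3:ℝ) := by nlinarith [mul_le_mul_of_nonneg_left hqa (mul_nonneg hK.le hupos.le)]
      have hint : IntegrableOn (fun u : ℝ => K * a * u ^ (-3:ℝ)) (Set.Ioi x₀) :=
        (integrableOn_Ioi_rpow_of_lt (by norm_num) hx₀).const_mul _
      have hnn : (0:ℝ → ℝ) ≤ᵐ[volume.restrict (Set.Ioi x₀)]
          (fun u : ℝ => K * a * u ^ (-3:ℝ)) := by
        filter_upwards [ae_restrict_mem measurableSet_Ioi] with u hu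
        have hu0 : 0 < u := lt_trans hx₀ hu
        positivity
      calc (∫⁻ u in Set.Ioi x₀, ENNReal.ofReal (q u * η (u, q u)))
          ≤ ∫⁻ u in Set.Ioi x₀, ENNReal.ofReal (K * a * u ^ (-3:ℝ)) := by
            exact setLIntegral_mono' measurableSet_Ioi hb
        _ = ENNReal.ofReal (∫ u in Set.Ioi x₀, K * a * u ^ (-3:ℝ)) :=
            (ofReal_integral_eq_lintegral_ofReal hint hnn).symm
        _ = ENNReal.ofReal (K * a / (2 * x₀ ^ 2)) := by
            congr 1
            rw [MeasureTheory.integral_const_mul, integral_Ioi_rpow_of_lt (by norm_num) hx₀]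
            have : x₀ ^ ((-3:ℝ) + 1) = (x₀ ^ 2)⁻¹ := by
              rw [show (-3:ℝ) + 1 = -(2:ℕ) by norm_num, Real.rpow_neg hx₀.le,
                Real.rpow_natCast]
            rw [this]
            field_simp
            ring
    calc _ ≤ ENNReal.ofReal (K * x₀ / a ^ 2) + ENNReal.ofReal (K * a / (2 * x₀ ^ 2)) :=
          add_le_add h1 h2
      _ = ENNReal.ofReal (K * (x₀ / a ^ 2 + a / (2 * x₀ ^ 2))) := by
          rw [← ENNReal.ofReal_add (by positivity) (by positivity)]
          congr 1
          field_simp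
  refine ⟨?_, key⟩
  exact lt_of_le_of_lt (key 1 one_pos) ENNReal.ofReal_lt_top
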